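/- Let Φ : ℝ^N → Set(ℝ^N) be a monotone set-valued map, let Q, M be real N×N matrices with M invertible such that H := Q M⁻¹ is symmetric positive definite and D := Qᵀ + Q − Mᵀ H M is symmetric positive definite. Let ξ, ξ̂, V ∈ ℝ^N satisfy Q(ξ − ξ̂) + V ∈ Φ(ξ̂), let ξ⁺ = ξ − M(ξ − ξ̂), and let ε ≥ 0 with ‖V‖ ≤ ε. Then for every ξ* with 0 ∈ Φ(ξ*), ‖ξ⁺ − ξ*‖_H ≤ ‖ξ − ξ*‖_H + μ ε, where μ = λ_min(H)^{−1/2} + λ_min(D)^{−1/2}. -/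

import Mathlib

open Matrix

namespace Stmt6Aux
variable {N : ℕ}

/-- Cauchy–Schwarz for dot product. -/
lemma dot_cs (x y : Fin N → ℝ) : x ⬝ᵥ y ≤ Real.sqrt (x ⬝ᵥ x) * Real.sqrt (y ⬝ᵥ y) := by
  have h := Finset.sum_mul_sq_le_sq_mul_sq Finset.univ x y
  have hx : x ⬝ᵥ x = ∑ i, x i ^ 2 := by simp [dotProduct, sq]
  have hy : y ⬝ᵥ y = ∑ i, y i ^ 2 := by simp [dotProduct, sq]
  have hxy : x ⬝ᵥ y = ∑ i, x i * y i := rfl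
  rw [hx, hy, hxy]
  have h1 : (∑ i, x i * y i) ≤ |∑ i, x i * y i| := le_abs_self _
  refine h1.trans ?_
  rw [← Real.sqrt_mul_self (abs_nonneg _), ← Real.sqrt_mul (by positivity)]
  apply Real.sqrt_le_sqrt
  rw [← sq_abs, sq_abs] at *
  calc |∑ i, x i * y i| * |∑ i, x i * y i| = (∑ i, x i * y i)^2 := by rw [← sq_abs]; ring
    _ ≤ _ := h

/-- Triangle inequality for the Euclidean "sqrt dot" norm. -/
lemma dot_triangle (x y : Fin N → ℝ) :
    Real.sqrt ((x + y) ⬝ᵥ (x + y)) ≤ Real.sqrt (x ⬝ᵥ x) + Real.sqrt (y ⬝ᵥ y) := by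
  have hx : 0 ≤ Real.sqrt (x ⬝ᵥ x) := Real.sqrt_nonneg _
  have hy : 0 ≤ Real.sqrt (y ⬝ᵥ y) := Real.sqrt_nonneg _
  have h2 : (x + y) ⬝ᵥ (x + y) ≤ (Real.sqrt (x ⬝ᵥ x) + Real.sqrt (y ⬝ᵥ y))^2 := by
    have e : (x + y) ⬝ᵥ (x + y) = x ⬝ᵥ x + 2 * (x ⬝ᵥ y) + y ⬝ᵥ y := by
      simp [dotProduct_add, add_dotProduct, dotProduct_comm y x]; ring
    have cs := dot_cs x y
    have hxx : (0:ℝ) ≤ x ⬝ᵥ x := by simpa [dotProduct, sq] using Finset.sum_nonneg (fun i _ => mul_self_nonneg (x i))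
    have hyy : (0:ℝ) ≤ y ⬝ᵥ y := by simpa [dotProduct, sq] using Finset.sum_nonneg (fun i _ => mul_self_nonneg (y i))
    have sx : Real.sqrt (x ⬝ᵥ x) ^ 2 = x ⬝ᵥ x := Real.sq_sqrt hxx
    have sy : Real.sqrt (y ⬝ᵥ y) ^ 2 = y ⬝ᵥ y := Real.sq_sqrt hyy
    nlinarith [cs]
  calc Real.sqrt ((x + y) ⬝ᵥ (x + y)) ≤ Real.sqrt ((Real.sqrt (x ⬝ᵥ x) + Real.sqrt (y ⬝ᵥ y))^2) :=
        Real.sqrt_le_sqrt h2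
    _ = _ := Real.sqrt_sq (by positivity)


lemma dot_self_nonneg (x : Fin N → ℝ) : (0:ℝ) ≤ x ⬝ᵥ x := by
  simpa [dotProduct] using Finset.sum_nonneg (fun i _ => mul_self_nonneg (x i))

lemma rayleigh {A : Matrix (Fin N) (Fin N) ℝ} (hA : A.IsHermitian) (x : Fin N → ℝ) :
    (⨅ i, hA.eigenvalues i) * (x ⬝ᵥ x) ≤ x ⬝ᵥ A *ᵥ x := by
  classical
  set U : Matrix (Fin N) (Fin N) ℝ := (hA.eigenvectorUnitary : Matrix (Fin N) (Fin N) ℝ) with hU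
  set y : Fin N → ℝ := (star U) *ᵥ x with hy
  have hUs : U * star U = 1 := (Matrix.mem_unitaryGroup_iff).mp hA.eigenvectorUnitary.2
  have hstarU : star U = Uᵀ := by
    ext i j; simp [Matrix.star_apply]
  have hdot : x ⬝ᵥ A *ᵥ x = y ⬝ᵥ (Matrix.diagonal hA.eigenvalues) *ᵥ y := by
    conv_lhs => rw [hA.spectral_theorem]
    have hdg : Matrix.diagonal ((RCLike.ofReal : ℝ → ℝ) ∘ hA.eigenvalues)
        = Matrix.diagonal hA.eigenvalues := by
      congr 1
    rw [hdg, Unitary.conjStarAlgAut_apply, ← Matrix.mulVec_mulVec, ← Matrix.mulVec_mulVec, Matrix.dotProduct_mulVec (A := U)]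
    congr 1
    rw [hy, hstarU, Matrix.mulVec_transpose]
  have hnorm : x ⬝ᵥ x = y ⬝ᵥ y := by
    rw [hstarU] at hUs
    rw [hy, Matrix.dotProduct_mulVec, hstarU, Matrix.vecMul_transpose, Matrix.mulVec_mulVec,
      hUs, Matrix.one_mulVec]
  rw [hdot, hnorm]
  have hexp : y ⬝ᵥ (Matrix.diagonal hA.eigenvalues) *ᵥ y = ∑ i, hA.eigenvalues i * (y i * y i) := by
    simp [dotProduct, Matrix.mulVec_diagonal]; apply Finset.sum_congr rfl; intro i _; ring
  have hyy : y ⬝ᵥ y = ∑ i, y i * y i := rfl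
  rw [hexp, hyy, Finset.mul_sum]
  apply Finset.sum_le_sum
  intro i _
  apply mul_le_mul_of_nonneg_right _ (mul_self_nonneg _)
  exact ciInf_le (Set.Finite.bddBelow (Set.finite_range _)) i

end Stmt6Aux


set_option maxHeartbeats 1000000 in
open Stmt6Aux in
theorem stmt6 {N : ℕ} (Φ : (Fin N → ℝ) → Set (Fin N → ℝ))
    (hmono : ∀ u v p q, p ∈ Φ u → q ∈ Φ v → 0 ≤ (u - v) ⬝ᵥ (p - q))
    (Q M : Matrix (Fin N) (Fin N) ℝ) (hM : IsUnit M.det)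
    (hH : (Q * M⁻¹).PosDef)
    (hD : (Qᵀ + Q - Mᵀ * (Q * M⁻¹) * M).PosDef)
    (ξ ξhat V : Fin N → ℝ)
    (hincl : Q.mulVec (ξ - ξhat) + V ∈ Φ ξhat)
    (ξplus : Fin N → ℝ) (hplus : ξplus = ξ - M.mulVec (ξ - ξhat))
    (ε : ℝ) (hε : 0 ≤ ε) (hV : Real.sqrt (V ⬝ᵥ V) ≤ ε)
    (ξstar : Fin N → ℝ) (hstar : (0 : Fin N → ℝ) ∈ Φ ξstar) :
    Real.sqrt ((ξplus - ξstar) ⬝ᵥ (Q * M⁻¹).mulVec (ξplus - ξstar)) ≤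
      Real.sqrt ((ξ - ξstar) ⬝ᵥ (Q * M⁻¹).mulVec (ξ - ξstar)) +
        ((Real.sqrt (⨅ i, hH.1.eigenvalues i))⁻¹ +
          (Real.sqrt (⨅ i, hD.1.eigenvalues i))⁻¹) * ε := by
  classical
  rcases Nat.eq_zero_or_pos N with h0 | hNpos
  · subst h0
    simp only [show ∀ x y : Fin 0 → ℝ, x ⬝ᵥ y = 0 from fun x y => rfl]
    rw [Real.iInf_of_isEmpty, Real.iInf_of_isEmpty]
    simp [hε]
  haveI : Nonempty (Fin N) := ⟨⟨0, hNpos⟩⟩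
  set cH : ℝ := ⨅ i, hH.1.eigenvalues i with hcH
  set cD : ℝ := ⨅ i, hD.1.eigenvalues i with hcD
  have hcHpos : 0 < cH := by
    obtain ⟨i, hi⟩ := exists_eq_ciInf_of_finite (f := hH.1.eigenvalues)
    rw [hcH, ← hi]; exact hH.eigenvalues_pos i
  have hcDpos : 0 < cD := by
    obtain ⟨i, hi⟩ := exists_eq_ciInf_of_finite (f := hD.1.eigenvalues)
    rw [hcD, ← hi]; exact hD.eigenvalues_pos i
  have hrw0 := fun x => rayleigh hH.1 x
  have hrd0 := fun x => rayleigh hD.1 x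
  rw [← hcH] at hrw0
  rw [← hcD] at hrd0
  clear_value cH cD
  have hHM : (Q * M⁻¹) * M = Q := by
    rw [mul_assoc, Matrix.nonsing_inv_mul M hM, mul_one]
  have hHsym : (Q * M⁻¹)ᵀ = Q * M⁻¹ := by
    ext i j
    simpa [Matrix.conjTranspose_apply, Matrix.transpose_apply] using
      (congrFun (congrFun hH.1 i) j)
  have symdot : ∀ x y : Fin N → ℝ, x ⬝ᵥ (Q * M⁻¹) *ᵥ y = y ⬝ᵥ (Q * M⁻¹) *ᵥ x := by
    intro x y
    rw [Matrix.dotProduct_mulVec, ← Matrix.mulVec_transpose, hHsym, dotProduct_comm]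
  have expand : ∀ u v : Fin N → ℝ, (u - v) ⬝ᵥ (Q * M⁻¹) *ᵥ (u - v)
      = u ⬝ᵥ (Q * M⁻¹) *ᵥ u - u ⬝ᵥ (Q * M⁻¹) *ᵥ v - v ⬝ᵥ (Q * M⁻¹) *ᵥ u + v ⬝ᵥ (Q * M⁻¹) *ᵥ v := by
    intro u v
    rw [Matrix.mulVec_sub, dotProduct_sub, sub_dotProduct, sub_dotProduct]
    ring
  set e : Fin N → ℝ := ξ - ξhat with he
  set w : Fin N → ℝ := ξ - ξstar with hw
  set z : Fin N → ℝ := ξhat - ξstar with hz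
  clear_value e w z
  have hplus2 : ξplus - ξstar = w - M *ᵥ e := by rw [hplus, hw]; abel
  have hzwe : z = w - e := by rw [hz, hw, he]; abel
  set S : ℝ := w ⬝ᵥ (Q * M⁻¹) *ᵥ w with hS
  set d : ℝ := e ⬝ᵥ (Qᵀ + Q - Mᵀ * (Q * M⁻¹) * M) *ᵥ e with hd
  set T : ℝ := (ξplus - ξstar) ⬝ᵥ (Q * M⁻¹) *ᵥ (ξplus - ξstar) with hT
  have hHMe : (Q * M⁻¹) *ᵥ (M *ᵥ e) = Q *ᵥ e := by rw [Matrix.mulVec_mulVec, hHM]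
  have h1 : w ⬝ᵥ (Q * M⁻¹) *ᵥ (M *ᵥ e) = w ⬝ᵥ Q *ᵥ e := by rw [hHMe]
  have h2 : (M *ᵥ e) ⬝ᵥ (Q * M⁻¹) *ᵥ w = w ⬝ᵥ Q *ᵥ e := by rw [symdot, hHMe]
  have h3 : (M *ᵥ e) ⬝ᵥ (Q * M⁻¹) *ᵥ (M *ᵥ e) = e ⬝ᵥ (Mᵀ * (Q * M⁻¹) * M) *ᵥ e := by
    rw [← Matrix.mulVec_mulVec (M := Mᵀ * (Q * M⁻¹)), ← Matrix.mulVec_mulVec (M := Mᵀ),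
      Matrix.dotProduct_mulVec (A := Mᵀ), Matrix.vecMul_transpose, hHMe]
  have h4 : e ⬝ᵥ Qᵀ *ᵥ e = e ⬝ᵥ Q *ᵥ e := by
    rw [Matrix.mulVec_transpose, dotProduct_comm, ← Matrix.dotProduct_mulVec]
  have hdexp : d = e ⬝ᵥ Qᵀ *ᵥ e + e ⬝ᵥ Q *ᵥ e - e ⬝ᵥ (Mᵀ * (Q * M⁻¹) * M) *ᵥ e := by
    rw [hd, Matrix.sub_mulVec, Matrix.add_mulVec, dotProduct_sub, dotProduct_add]
  have hTexp : T = S - 2 * (w ⬝ᵥ Q *ᵥ e) + e ⬝ᵥ (Mᵀ * (Q * M⁻¹) * M) *ᵥ e := by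
    rw [hT, hplus2, expand w (M *ᵥ e), hS]
    linarith [h1, h2, h3]
  clear_value S d T
  -- monotonicity
  have hm := hmono ξhat ξstar _ _ hincl hstar
  rw [sub_zero, ← hz, dotProduct_add] at hm
  have hkey : T ≤ S - d + 2 * (z ⬝ᵥ V) := by
    have hzQe : z ⬝ᵥ Q *ᵥ e = w ⬝ᵥ Q *ᵥ e - e ⬝ᵥ Q *ᵥ e := by
      rw [hzwe, sub_dotProduct]
    linarith [hm, h4, hzQe, hTexp, hdexp]
  -- eigenvalue bounds
  have hrw := hrw0 w
  have hre := hrd0 e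
  rw [← hS] at hrw
  rw [← hd] at hre
  have hSnn : 0 ≤ S := le_trans (mul_nonneg hcHpos.le (dot_self_nonneg w)) hrw
  have hdnn : 0 ≤ d := le_trans (mul_nonneg hcDpos.le (dot_self_nonneg e)) hre
  set a : ℝ := Real.sqrt S with ha
  set b : ℝ := Real.sqrt d with hb
  set α : ℝ := (Real.sqrt cH)⁻¹ with hα
  set β : ℝ := (Real.sqrt cD)⁻¹ with hβ
  have hαnn : 0 ≤ α := by rw [hα]; positivity
  have hβnn : 0 ≤ β := by rw [hβ]; positivity
  have hann : 0 ≤ a := by rw [ha]; exact Real.sqrt_nonneg _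
  have hbnn : 0 ≤ b := by rw [hb]; exact Real.sqrt_nonneg _
  have ha2 : a ^ 2 = S := by rw [ha]; exact Real.sq_sqrt hSnn
  have hb2 : b ^ 2 = d := by rw [hb]; exact Real.sq_sqrt hdnn
  have hwbound : Real.sqrt (w ⬝ᵥ w) ≤ α * a := by
    have hle : w ⬝ᵥ w ≤ cH⁻¹ * S := by
      rw [le_inv_mul_iff₀ hcHpos]; exact hrw
    calc Real.sqrt (w ⬝ᵥ w) ≤ Real.sqrt (cH⁻¹ * S) := Real.sqrt_le_sqrt hle
      _ = α * a := by
          rw [hα, ha, Real.sqrt_mul (by positivity), Real.sqrt_inv]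
  have hebound : Real.sqrt (e ⬝ᵥ e) ≤ β * b := by
    have hle : e ⬝ᵥ e ≤ cD⁻¹ * d := by
      rw [le_inv_mul_iff₀ hcDpos]; exact hre
    calc Real.sqrt (e ⬝ᵥ e) ≤ Real.sqrt (cD⁻¹ * d) := Real.sqrt_le_sqrt hle
      _ = β * b := by
          rw [hβ, hb, Real.sqrt_mul (by positivity), Real.sqrt_inv]
  clear_value a b α β
  have hztri : Real.sqrt (z ⬝ᵥ z) ≤ Real.sqrt (w ⬝ᵥ w) + Real.sqrt (e ⬝ᵥ e) := by
    have hz' : z = w + (-e) := by rw [hzwe]; abel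
    rw [hz']
    have := dot_triangle w (-e)
    simpa [neg_dotProduct, dotProduct_neg] using this
  have hzV : z ⬝ᵥ V ≤ ε * (α * a + β * b) := by
    calc z ⬝ᵥ V ≤ Real.sqrt (z ⬝ᵥ z) * Real.sqrt (V ⬝ᵥ V) := dot_cs z V
      _ ≤ (α * a + β * b) * ε := by
          apply mul_le_mul _ hV (Real.sqrt_nonneg _) (by positivity)
          exact hztri.trans (add_le_add hwbound hebound)
      _ = ε * (α * a + β * b) := by ring
  have hsq : T ≤ (a + (α + β) * ε) ^ 2 := by
    have p1 : 0 ≤ a * (ε * β) := mul_nonneg hann (mul_nonneg hε hβnn)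
    have p2 : 0 ≤ (ε * α) ^ 2 := sq_nonneg _
    have p3 : 0 ≤ (ε * α) * (ε * β) :=
      mul_nonneg (mul_nonneg hε hαnn) (mul_nonneg hε hβnn)
    have p4 : 0 ≤ (b - ε * β) ^ 2 := sq_nonneg _
    have hid : (a + (α + β) * ε) ^ 2 - (a ^ 2 - b ^ 2 + 2 * (ε * (α * a + β * b)))
        = 2 * (a * (ε * β)) + (ε * α) ^ 2 + 2 * ((ε * α) * (ε * β)) + (b - ε * β) ^ 2 := by
      ring
    linarith [hkey, hzV, ha2, hb2, hid, p1, p2, p3, p4]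
  calc Real.sqrt T ≤ Real.sqrt ((a + (α + β) * ε) ^ 2) := Real.sqrt_le_sqrt hsq
    _ = a + (α + β) * ε := Real.sqrt_sq (by positivity)
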